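/- Let D ≥ 1 be an integer, p ∈ [1,∞), α > 0, b > 0, and h a natural number. Let ω = ∏_{i=1}^{D} [a_i, a_i + s_i] ⊆ ℝ^D be an axis-aligned box with center c whose side lengths satisfy 0 < s_i ≤ 3^{−⌊h/D⌋} for every i. Then for every x ∈ ω, b·‖x−c‖_p^α ≤ b·D^{α/p}·3^{−α⌊h/D⌋} ≤ b·3^{α}·D^{α/p}·3^{−αh/D}, where ‖y‖_p = (∑_{i=1}^{D} |y_i|^p)^{1/p}. -/

import Mathlib

open Finset in
/-- Decreasing-diameter check: an axis-aligned box in `ℝ^D` divided `h` times has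
every side of length at most `3^{−⌊h/D⌋}`; for any point `x` of the box with center `c`,
`b·‖x−c‖_p^α ≤ b·D^{α/p}·3^{−α⌊h/D⌋} ≤ b·3^{α}·D^{α/p}·3^{−αh/D}`. -/
theorem stmt_4 (D : ℕ) (hD : 1 ≤ D) (p α b : ℝ) (hp : 1 ≤ p) (hα : 0 < α) (hb : 0 < b)
    (h : ℕ) (a s : Fin D → ℝ)
    (hs0 : ∀ i, 0 < s i) (hs : ∀ i, s i ≤ (3 : ℝ) ^ (-(((h / D : ℕ)) : ℝ)))
    (c : Fin D → ℝ) (hc : ∀ i, c i = a i + s i / 2)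
    (x : Fin D → ℝ) (hx : ∀ i, x i ∈ Set.Icc (a i) (a i + s i)) :
    b * ((∑ i, |x i - c i| ^ p) ^ (1 / p)) ^ α
        ≤ b * (D : ℝ) ^ (α / p) * (3 : ℝ) ^ (-(α * (((h / D : ℕ)) : ℝ))) ∧
    b * (D : ℝ) ^ (α / p) * (3 : ℝ) ^ (-(α * (((h / D : ℕ)) : ℝ)))
        ≤ b * (3 : ℝ) ^ α * (D : ℝ) ^ (α / p) * (3 : ℝ) ^ (-(α * (h : ℝ) / (D : ℝ))) := by
  have hp0 : (0 : ℝ) < p := lt_of_lt_of_le one_pos hp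
  have hp0' : p ≠ 0 := hp0.ne'
  set m : ℝ := (((h / D : ℕ)) : ℝ) with hm
  set t : ℝ := (3 : ℝ) ^ (-m) with ht
  have ht0 : 0 < t := Real.rpow_pos_of_pos (by norm_num) _
  have hDpos : (0 : ℝ) < D := by exact_mod_cast Nat.lt_of_lt_of_le Nat.zero_lt_one hD
  constructor
  · -- first inequality
    have key : ∀ i, |x i - c i| ≤ t := by
      intro i
      have hxi := hx i
      have : |x i - c i| ≤ s i / 2 := by
        rw [abs_le, hc i]
        exact ⟨by linarith [hxi.2, hxi.1], by linarith [hxi.2, hxi.1]⟩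
      linarith [hs i, hs0 i]
    have hsum : (∑ i, |x i - c i| ^ p) ≤ (D : ℝ) * t ^ p := by
      calc (∑ i, |x i - c i| ^ p) ≤ ∑ _i : Fin D, t ^ p :=
            Finset.sum_le_sum fun i _ =>
              Real.rpow_le_rpow (abs_nonneg _) (key i) hp0.le
        _ = (D : ℝ) * t ^ p := by simp [mul_comm]
    have hsum0 : (0 : ℝ) ≤ ∑ i, |x i - c i| ^ p :=
      Finset.sum_nonneg fun i _ => Real.rpow_nonneg (abs_nonneg _) _
    have h1 : (∑ i, |x i - c i| ^ p) ^ (1 / p) ≤ (D : ℝ) ^ (1 / p) * t := by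
      calc (∑ i, |x i - c i| ^ p) ^ (1 / p)
          ≤ ((D : ℝ) * t ^ p) ^ (1 / p) :=
            Real.rpow_le_rpow hsum0 hsum (by positivity)
        _ = (D : ℝ) ^ (1 / p) * t := by
            rw [Real.mul_rpow hDpos.le (Real.rpow_nonneg ht0.le _),
              ← Real.rpow_mul ht0.le]
            field_simp
            simp
    have h2 : ((∑ i, |x i - c i| ^ p) ^ (1 / p)) ^ α
        ≤ ((D : ℝ) ^ (1 / p) * t) ^ α :=
      Real.rpow_le_rpow (Real.rpow_nonneg hsum0 _) h1 hα.le
    have h3 : ((D : ℝ) ^ (1 / p) * t) ^ α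
        = (D : ℝ) ^ (α / p) * (3 : ℝ) ^ (-(α * m)) := by
      rw [Real.mul_rpow (Real.rpow_nonneg hDpos.le _) ht0.le,
        ← Real.rpow_mul hDpos.le, ht, ← Real.rpow_mul (by norm_num : (0:ℝ) ≤ 3)]
      ring_nf
    rw [mul_assoc]
    refine mul_le_mul_of_nonneg_left ?_ hb.le
    rw [← h3]; exact h2
  · -- second inequality
    have hfloor : (h : ℝ) / (D : ℝ) - 1 ≤ m := by
      have h1 : h < D * (h / D) + D := by
        linarith [Nat.div_add_mod h D, Nat.mod_lt h (Nat.lt_of_lt_of_le Nat.zero_lt_one hD)]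
      have h1' : (h : ℝ) < (D : ℝ) * m + (D : ℝ) := by rw [hm]; exact_mod_cast h1
      rw [div_sub_one hDpos.ne', div_le_iff₀ hDpos]
      nlinarith
    have hexp : -(α * m) ≤ α - α * (h : ℝ) / (D : ℝ) := by
      have := mul_le_mul_of_nonneg_left hfloor hα.le
      ring_nf at this ⊢
      linarith
    have h4 : (3 : ℝ) ^ (-(α * m)) ≤ (3 : ℝ) ^ α * (3 : ℝ) ^ (-(α * (h : ℝ) / (D : ℝ))) := by
      rw [← Real.rpow_add (by norm_num : (0:ℝ) < 3)]
      apply Real.rpow_le_rpow_left_iff (by norm_num : (1:ℝ) < 3) |>.mpr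
      linarith [hexp]
    calc b * (D : ℝ) ^ (α / p) * (3 : ℝ) ^ (-(α * m))
        ≤ b * (D : ℝ) ^ (α / p) * ((3 : ℝ) ^ α * (3 : ℝ) ^ (-(α * (h : ℝ) / (D : ℝ)))) := by
          apply mul_le_mul_of_nonneg_left h4
          positivity
      _ = b * (3 : ℝ) ^ α * (D : ℝ) ^ (α / p) * (3 : ℝ) ^ (-(α * (h : ℝ) / (D : ℝ))) := by
          ring
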